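/- Let (J,γ) be a nilpotent metrised real Jordan algebra of dimension n ≥ 2 whose trace form γ has a signature with k negative eigenvalues. Suppose (J,γ) admits a semi-canonical form (with respect to some basis e₁,…,e_n) whose partition S has exactly m subsets of size 2, and suppose m < -3/2 + √(9/4 + 2·max(k, n-k)). Then (J,γ) is reducible, i.e., J is the direct sum of two nonzero mutually γ-orthogonal ideals. -/

import Mathlib

open Module

/-- The central ascending series of a commutative algebra with multiplication `mul`:
`C₀ = {0}`, `C_{k+1} = {x : x∙y ∈ C_k for all y}`. -/
def cas {A : Type*} [AddCommGroup A] [Module ℝ A]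
    (mul : A →ₗ[ℝ] A →ₗ[ℝ] A) : ℕ → Submodule ℝ A
  | 0 => ⊥
  | (k + 1) =>
    { carrier := {x | ∀ y, mul x y ∈ cas mul k}
      add_mem' := fun {a b} ha hb y => by
        simpa [map_add, LinearMap.add_apply] using (cas mul k).add_mem (ha y) (hb y)
      zero_mem' := fun y => by simp
      smul_mem' := fun c a ha y => by
        simpa [map_smul, LinearMap.smul_apply] using (cas mul k).smul_mem c (ha y) }

/-- `(J,γ)` is reducible: `J` is the direct sum of two nonzero ideals that are mutually
`γ`-orthogonal. -/
def Reducible {J : Type*} [AddCommGroup J] [Module ℝ J]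
    (mul : J →ₗ[ℝ] J →ₗ[ℝ] J) (γ : J →ₗ[ℝ] J →ₗ[ℝ] ℝ) : Prop :=
  ∃ I I' : Submodule ℝ J, I ≠ ⊥ ∧ I' ≠ ⊥ ∧ IsCompl I I' ∧
    (∀ x ∈ I, ∀ y, mul x y ∈ I) ∧ (∀ x ∈ I', ∀ y, mul x y ∈ I') ∧
    (∀ x ∈ I, ∀ y ∈ I', γ x y = 0)

section helpers

lemma bilin_sum {J : Type*} [AddCommGroup J] [Module ℝ J] {ι : Type*}
    (ψ : J →ₗ[ℝ] J →ₗ[ℝ] ℝ) (s : Finset ι) (f g : ι → ℝ) (w z : ι → J) :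
    ψ (∑ i ∈ s, f i • w i) (∑ j ∈ s, g j • z j)
      = ∑ i ∈ s, ∑ j ∈ s, f i * g j * ψ (w i) (z j) := by
  simp only [map_sum, map_smul, LinearMap.sum_apply, LinearMap.smul_apply, smul_eq_mul,
    Finset.mul_sum]
  rw [Finset.sum_comm]
  exact Finset.sum_congr rfl fun i _ => Finset.sum_congr rfl fun j _ => by ring

lemma negdef_card_le {J : Type*} [AddCommGroup J] [Module ℝ J] [FiniteDimensional ℝ J]
    {n : ℕ} (ψ : J →ₗ[ℝ] J →ₗ[ℝ] ℝ) (b : Basis (Fin n) ℝ J)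
    (horthb : ∀ i j : Fin n, i ≠ j → ψ (b i) (b j) = 0)
    (T : Finset (Fin n)) (v : Fin n → J)
    (hdiag : ∀ i ∈ T, ψ (v i) (v i) < 0)
    (horthv : ∀ i ∈ T, ∀ j ∈ T, i ≠ j → ψ (v i) (v j) = 0) :
    T.card ≤ (Finset.univ.filter fun i : Fin n => ψ (b i) (b i) < 0).card := by
  classical
  set N := (Finset.univ.filter fun i : Fin n => ψ (b i) (b i) < 0) with hN
  let μ : (↥T → ℝ) →ₗ[ℝ] J :=
    { toFun := fun c => ∑ i : ↥T, c i • v ↑i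
      map_add' := by intro c d; simp [add_smul, Finset.sum_add_distrib]
      map_smul' := by intro a c; simp [smul_smul, Finset.smul_sum]
    }
  let Φ : (↥T → ℝ) →ₗ[ℝ] (↥N → ℝ) :=
    (LinearMap.pi fun q : ↥N => (Finsupp.lapply (↑q : Fin n)) ∘ₗ (b.repr : J →ₗ[ℝ] (Fin n →₀ ℝ))) ∘ₗ μ
  have hinj : Function.Injective Φ := by
    rw [← LinearMap.ker_eq_bot, LinearMap.ker_eq_bot']
    intro c hc
    set x := ∑ i : ↥T, c i • v ↑i with hx
    have hcx : ∀ i : Fin n, i ∈ N → b.repr x i = 0 := by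
      intro i hi
      have := congrFun hc ⟨i, hi⟩
      simpa [Φ, μ, x] using this
    have h1 : 0 ≤ ψ x x := by
      have hxr : x = ∑ i : Fin n, b.repr x i • b i := (b.sum_repr x).symm
      calc (0:ℝ) ≤ ∑ i : Fin n, ∑ j : Fin n, b.repr x i * b.repr x j * ψ (b i) (b j) := by
            apply Finset.sum_nonneg; intro i _
            rw [Finset.sum_eq_single i]
            · rcases Classical.em (i ∈ N) with h | h
              · rw [hcx i h]; simp
              · have h0 : 0 ≤ ψ (b i) (b i) := by
                  simp only [hN, Finset.mem_filter, Finset.mem_univ, true_and, not_lt] at h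
                  exact h
                nlinarith [sq_nonneg (b.repr x i)]
            · intro j _ hj; rw [horthb i j (Ne.symm hj)]; ring
            · intro h; exact absurd (Finset.mem_univ i) h
        _ = ψ x x := by rw [← bilin_sum ψ Finset.univ _ _ b b]; rw [← hxr]
    have h2 : ψ x x = ∑ i : ↥T, c i * c i * ψ (v ↑i) (v ↑i) := by
      rw [hx, bilin_sum ψ Finset.univ c c (fun i : ↥T => v ↑i) (fun i : ↥T => v ↑i)]
      refine Finset.sum_congr rfl fun i _ => ?_
      rw [Finset.sum_eq_single i]
      · intro j _ hj
        rw [horthv ↑i i.2 ↑j j.2 (fun hh => hj (Subtype.ext hh).symm)]; ring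
      · intro h; exact absurd (Finset.mem_univ i) h
    have h3 : ∀ i : ↥T, c i * c i * ψ (v ↑i) (v ↑i) ≤ 0 := by
      intro i
      have := hdiag ↑i i.2
      nlinarith [sq_nonneg (c i)]
    funext i
    show c i = 0
    have hz : ∑ j : ↥T, c j * c j * ψ (v ↑j) (v ↑j) = 0 := le_antisymm (Finset.sum_nonpos fun j _ => h3 j) (h2 ▸ h1)
    have hterm := (Finset.sum_eq_zero_iff_of_nonpos (fun j _ => h3 j)).mp hz i (Finset.mem_univ i)
    have hne := (hdiag ↑i i.2).ne
    rcases mul_eq_zero.mp hterm with h | h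
    · exact mul_self_eq_zero.mp h
    · exact absurd h hne
  have := LinearMap.finrank_le_finrank_of_injective hinj
  simpa [Module.finrank_fintype_fun_eq_card] using this

lemma reducible_of_ann {J : Type*} [AddCommGroup J] [Module ℝ J] [FiniteDimensional ℝ J]
    (hdim : 2 ≤ finrank ℝ J)
    (mul : J →ₗ[ℝ] J →ₗ[ℝ] J) (γ : J →ₗ[ℝ] J →ₗ[ℝ] ℝ)
    (hcomm : ∀ u v, mul u v = mul v u)
    (hsymm : ∀ u v, γ u v = γ v u)
    (htrace : ∀ u v w, γ (mul u v) w = γ u (mul v w))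
    (x : J) (hxx : γ x x ≠ 0) (hann : ∀ y, mul x y = 0) :
    Reducible mul γ := by
  classical
  have hx0 : x ≠ 0 := by rintro rfl; simp at hxx
  refine ⟨Submodule.span ℝ {x}, LinearMap.ker (γ x), ?_, ?_, ?_, ?_, ?_, ?_⟩
  · simpa [Submodule.span_singleton_eq_bot] using hx0
  · intro hbot
    have hinj : Function.Injective (γ x) := by
      rwa [← LinearMap.ker_eq_bot]
    have := LinearMap.finrank_le_finrank_of_injective hinj
    simp [Module.finrank_self] at this
    omega
  · constructor
    · rw [Submodule.disjoint_def]
      intro z hz hz'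
      obtain ⟨a, rfl⟩ := Submodule.mem_span_singleton.mp hz
      rw [LinearMap.mem_ker, map_smul] at hz'
      have : a = 0 := by
        have : a * γ x x = 0 := by simpa using hz'
        rcases mul_eq_zero.mp this with h | h
        · exact h
        · exact absurd h hxx
      simp [this]
    · rw [codisjoint_iff_le_sup]
      intro y _
      have : y = (γ x y / γ x x) • x + (y - (γ x y / γ x x) • x) := by ring_nf; abel
      rw [this]
      refine Submodule.add_mem_sup (Submodule.mem_span_singleton.mpr ⟨_, rfl⟩) ?_
      rw [LinearMap.mem_ker]
      rw [map_sub, map_smul]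
      rw [smul_eq_mul, div_mul_cancel₀ _ hxx, sub_self]
  · intro z hz y
    obtain ⟨a, rfl⟩ := Submodule.mem_span_singleton.mp hz
    have h : mul (a • x) y = a • (mul x y) := by simp
    rw [h, hann y, smul_zero]
    exact Submodule.zero_mem _
  · intro z hz y
    rw [LinearMap.mem_ker] at hz ⊢
    rw [hsymm, htrace, hcomm y x, hann y]
    simp
  · intro z hz y hy
    obtain ⟨a, rfl⟩ := Submodule.mem_span_singleton.mp hz
    rw [LinearMap.mem_ker] at hy
    rw [map_smul]
    simp [hy]

end helpers

set_option maxHeartbeats 1600000 in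
/-- let `(J,γ)` be a nilpotent metrised real Jordan algebra of dimension
`n ≥ 2` whose trace form has `k` negative eigenvalues. If `(J,γ)` admits a semi-canonical
form (flag property `hflag`, partition encoded by the involution `σ`) whose partition has
exactly `m` subsets of size 2 and `m < -3/2 + √(9/4 + 2 max(k, n-k))`, then `(J,γ)` is
reducible. -/
theorem stmt_12 {J : Type*} [AddCommGroup J] [Module ℝ J] [FiniteDimensional ℝ J]
    (n : ℕ) (hn : 2 ≤ n) (hdim : finrank ℝ J = n)
    (mul : J →ₗ[ℝ] J →ₗ[ℝ] J)
    (hcomm : ∀ u v, mul u v = mul v u)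
    (hjordan : ∀ u v, mul u (mul (mul u u) v) = mul (mul u u) (mul u v))
    (γ : J →ₗ[ℝ] J →ₗ[ℝ] ℝ)
    (hsymm : ∀ u v, γ u v = γ v u)
    (hnd : ∀ u, (∀ v, γ u v = 0) → u = 0)
    (htrace : ∀ u v w, γ (mul u v) w = γ u (mul v w))
    (hnilp : ∃ m, cas mul m = ⊤)
    -- the signature of γ has k negative eigenvalues
    (k : ℕ)
    (hsig : ∃ b : Basis (Fin n) ℝ J, (∀ i j : Fin n, i ≠ j → γ (b i) (b j) = 0) ∧
      (Finset.univ.filter fun i : Fin n => γ (b i) (b i) < 0).card = k)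
    -- a semi-canonical form of (J,γ)
    (e : Basis (Fin n) ℝ J)
    (hflag : ∀ l, 1 ≤ l → l ≤ n →
      ∀ x ∈ Submodule.span ℝ (⇑e '' {i : Fin n | (i : ℕ) < l}),
        ∀ y, mul x y ∈ Submodule.span ℝ (⇑e '' {i : Fin n | (i : ℕ) < l - 1}))
    (σ : Fin n → Fin n) (hσ : ∀ i, σ (σ i) = i)
    (hoff : ∀ i j : Fin n, j ≠ i → j ≠ σ i → γ (e i) (e j) = 0)
    (hsingle : ∀ i, σ i = i → γ (e i) (e i) = 1 ∨ γ (e i) (e i) = -1)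
    (hpair : ∀ i, σ i ≠ i → γ (e i) (e i) = 0 ∧ γ (e i) (e (σ i)) = 1)
    -- the partition has exactly m subsets of size 2
    (m : ℕ) (hm : (Finset.univ.filter fun i : Fin n => σ i ≠ i).card = 2 * m)
    -- the dimension bound
    (hlt : (m : ℝ) < -(3/2) + Real.sqrt (9/4 + 2 * (max k (n - k) : ℕ))) :
    Reducible mul γ := by
  classical
  obtain ⟨b, horthb, hk⟩ := hsig
  have hσinj : Function.Injective σ := fun a c h => by
    have := congrArg σ h; rwa [hσ, hσ] at this
  -- ===================== counting the partition =====================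
  set L : Finset (Fin n) := Finset.univ.filter (fun i => (i : ℕ) < (σ i : ℕ)) with hLdef
  set U : Finset (Fin n) := Finset.univ.filter (fun i => (σ i : ℕ) < (i : ℕ)) with hUdef
  have hLU : (Finset.univ.filter fun i : Fin n => σ i ≠ i) = L ∪ U := by
    rw [hLdef, hUdef, ← Finset.filter_or]
    apply Finset.filter_congr
    intro i _
    constructor
    · intro h
      have : (σ i : ℕ) ≠ (i : ℕ) := fun hh => h (Fin.ext hh)
      omega
    · intro h hh
      rw [hh] at h; omega
  have hLUdisj : Disjoint L U := by
    rw [Finset.disjoint_left]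
    intro a haL haU
    simp only [hLdef, hUdef, Finset.mem_filter] at haL haU
    omega
  have hLcardUcard : L.card = U.card := by
    apply Finset.card_bij (fun i _ => σ i)
    · intro a ha
      simp only [hLdef, Finset.mem_filter] at ha
      simp only [hUdef, Finset.mem_filter, Finset.mem_univ, true_and, hσ]
      omega
    · intro a _ c _ h; exact hσinj h
    · intro c hc
      simp only [hUdef, Finset.mem_filter] at hc
      exact ⟨σ c, by simp only [hLdef, Finset.mem_filter, Finset.mem_univ, true_and, hσ]; omega, hσ c⟩
  have hLm : L.card = m := by
    have := hm
    rw [hLU, Finset.card_union_of_disjoint hLUdisj, ← hLcardUcard] at this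
    omega
  have hUm : U.card = m := by rw [← hLcardUcard]; exact hLm
  -- singles
  set Ppos : Finset (Fin n) := Finset.univ.filter (fun i => σ i = i ∧ γ (e i) (e i) = 1) with hPposdef
  set Pneg : Finset (Fin n) := Finset.univ.filter (fun i => σ i = i ∧ γ (e i) (e i) = -1) with hPnegdef
  have hsing : Ppos.card + Pneg.card + 2 * m = n := by
    have h1 : (Finset.univ.filter fun i : Fin n => σ i = i) = Ppos ∪ Pneg := by
      rw [hPposdef, hPnegdef, ← Finset.filter_or]
      apply Finset.filter_congr
      intro i _
      constructor
      · intro h; rcases hsingle i h with h1 | h1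
        · exact Or.inl ⟨h, h1⟩
        · exact Or.inr ⟨h, h1⟩
      · rintro (⟨h, _⟩ | ⟨h, _⟩) <;> exact h
    have h2 : Disjoint Ppos Pneg := by
      rw [Finset.disjoint_left]
      intro a ha hb
      simp only [hPposdef, hPnegdef, Finset.mem_filter] at ha hb
      rw [ha.2.2] at hb
      norm_num at hb
    have h3 := Finset.card_filter_add_card_filter_not (s := (Finset.univ : Finset (Fin n)))
      (p := fun i => σ i = i)
    have h4 : (Finset.univ.filter fun i : Fin n => ¬ σ i = i).card = 2 * m := hm
    rw [h1, Finset.card_union_of_disjoint h2] at h3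
    rw [h4] at h3
    simpa [Finset.card_univ] using h3
  -- ===================== inertia =====================
  set v : Fin n → J := fun i =>
    if σ i = i then e i
    else if (i : ℕ) < (σ i : ℕ) then e i + (2⁻¹ : ℝ) • e (σ i)
    else e (σ i) - (2⁻¹ : ℝ) • e i with hvdef
  have hvv : ∀ i i' : Fin n, i' ≠ i → i' ≠ σ i → γ (v i) (v i') = 0 := by
    intro i i' h1 h2
    have h3 : σ i' ≠ i := by
      intro h; apply h2; rw [← h, hσ]
    have h4 : σ i' ≠ σ i := fun h => h1 (hσinj h)
    have z1 : γ (e i) (e i') = 0 := hoff i i' h1 h2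
    have z2 : γ (e i) (e (σ i')) = 0 := hoff i (σ i') h3 h4
    have z3 : γ (e (σ i)) (e i') = 0 := hoff (σ i) i' h2 (by rw [hσ]; exact fun h => h1 h)
    have z4 : γ (e (σ i)) (e (σ i')) = 0 := hoff (σ i) (σ i') h4 (by rw [hσ]; exact h3)
    rw [hvdef]
    dsimp only
    split_ifs <;>
      simp [map_add, map_sub, map_smul, z1, z2, z3, z4]
  have hvposdiag : ∀ i ∈ Ppos ∪ L, γ (v i) (v i) = 1 := by
    intro i hi
    rcases Finset.mem_union.mp hi with h | h
    · simp only [hPposdef, Finset.mem_filter] at h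
      rw [hvdef]; dsimp only; rw [if_pos h.2.1]
      exact h.2.2
    · simp only [hLdef, Finset.mem_filter] at h
      have hne : σ i ≠ i := by intro hh; rw [hh] at h; omega
      rw [hvdef]; dsimp only; rw [if_neg hne, if_pos h.2]
      have hp := hpair i hne
      have hps : γ (e (σ i)) (e i) = 1 := by rw [hsymm]; exact hp.2
      have hpss : γ (e (σ i)) (e (σ i)) = 0 := (hpair (σ i) (by rw [hσ]; exact fun hh => hne hh.symm)).1
      simp [map_add, map_smul, hp.1, hp.2, hps, hpss]
      norm_num
  have hvnegdiag : ∀ i ∈ Pneg ∪ U, γ (v i) (v i) = -1 := by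
    intro i hi
    rcases Finset.mem_union.mp hi with h | h
    · simp only [hPnegdef, Finset.mem_filter] at h
      rw [hvdef]; dsimp only; rw [if_pos h.2.1]
      exact h.2.2
    · simp only [hUdef, Finset.mem_filter] at h
      have hne : σ i ≠ i := by intro hh; rw [hh] at h; omega
      rw [hvdef]; dsimp only; rw [if_neg hne, if_neg (by omega)]
      have hp := hpair i hne
      have hps : γ (e (σ i)) (e i) = 1 := by rw [hsymm]; exact hp.2
      have hpss : γ (e (σ i)) (e (σ i)) = 0 := (hpair (σ i) (by rw [hσ]; exact fun hh => hne hh.symm)).1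
      simp [map_sub, map_smul, hp.1, hp.2, hps, hpss]
      norm_num
  -- within each of the two index sets, distinct indices give disjoint σ-pairs
  have hsepP : ∀ i ∈ Ppos ∪ L, ∀ i' ∈ Ppos ∪ L, i ≠ i' → γ (v i) (v i') = 0 := by
    intro i hi i' hi' hne
    apply hvv i i' (Ne.symm hne)
    intro h
    rcases Finset.mem_union.mp hi with h1 | h1 <;>
      rcases Finset.mem_union.mp hi' with h2 | h2 <;>
      simp only [hPposdef, hLdef, Finset.mem_filter] at h1 h2
    · exact hne (by rw [h, h1.2.1] : i' = i).symm
    · exact hne (by rw [h, h1.2.1] : i' = i).symm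
    · have hs : σ i' = i := by rw [h, hσ]
      rw [h2.2.1] at hs
      exact hne hs.symm
    · have hs : σ i' = i := by rw [h, hσ]
      have hv1 := h1.2
      have hv2 := h2.2
      rw [← h] at hv1
      rw [hs] at hv2
      omega
  have hsepN : ∀ i ∈ Pneg ∪ U, ∀ i' ∈ Pneg ∪ U, i ≠ i' → γ (v i) (v i') = 0 := by
    intro i hi i' hi' hne
    apply hvv i i' (Ne.symm hne)
    intro h
    rcases Finset.mem_union.mp hi with h1 | h1 <;>
      rcases Finset.mem_union.mp hi' with h2 | h2 <;>
      simp only [hPnegdef, hUdef, Finset.mem_filter] at h1 h2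
    · exact hne (by rw [h, h1.2.1] : i' = i).symm
    · exact hne (by rw [h, h1.2.1] : i' = i).symm
    · have hs : σ i' = i := by rw [h, hσ]
      rw [h2.2.1] at hs
      exact hne hs.symm
    · have hs : σ i' = i := by rw [h, hσ]
      have hv1 := h1.2
      have hv2 := h2.2
      rw [← h] at hv1
      rw [hs] at hv2
      omega
  -- diagonal entries of b are nonzero
  have hbne : ∀ i : Fin n, γ (b i) (b i) ≠ 0 := by
    intro i h0
    have : b i = 0 := by
      apply hnd
      intro w
      have hw : w = ∑ j : Fin n, b.repr w j • b j := (b.sum_repr w).symm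
      rw [hw, map_sum]
      apply Finset.sum_eq_zero
      intro j _
      rcases Classical.em (j = i) with h | h
      · subst h; rw [map_smul, smul_eq_mul, h0, mul_zero]
      · rw [map_smul, smul_eq_mul, horthb i j (Ne.symm h), mul_zero]
    exact b.ne_zero i this
  have hbposcard : (Finset.univ.filter fun i : Fin n => (-γ) (b i) (b i) < 0).card = n - k := by
    have h1 : (Finset.univ.filter fun i : Fin n => (-γ) (b i) (b i) < 0)
        = (Finset.univ.filter fun i : Fin n => ¬ (γ (b i) (b i) < 0)) := by
      apply Finset.filter_congr
      intro i _
      have := hbne i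
      simp only [LinearMap.neg_apply, neg_neg, LinearMap.coe_mk, Pi.neg_apply]
      constructor
      · intro h; intro hh; simp at h; nlinarith
      · intro h; simp; rcases lt_trichotomy (γ (b i) (b i)) 0 with hh | hh | hh
        · exact absurd hh h
        · exact absurd hh this
        · exact hh
    rw [h1]
    have h2 := Finset.card_filter_add_card_filter_not (s := (Finset.univ : Finset (Fin n)))
      (p := fun i : Fin n => γ (b i) (b i) < 0)
    rw [hk] at h2
    simp only [Finset.card_univ, Fintype.card_fin] at h2
    omega
  -- apply the two inequalities
  have hNcard : Pneg.card + m ≤ k := by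
    have hdisj : Disjoint Pneg U := by
      rw [Finset.disjoint_left]
      intro a ha hb
      simp only [hPnegdef, hUdef, Finset.mem_filter] at ha hb
      rw [ha.2.1] at hb; omega
    have := negdef_card_le γ b horthb (Pneg ∪ U) v
      (fun i hi => by rw [hvnegdiag i hi]; norm_num)
      (fun i hi j hj hij => hsepN i hi j hj hij)
    rw [Finset.card_union_of_disjoint hdisj, hUm, hk] at this
    exact this
  have hPcardle : Ppos.card + m ≤ n - k := by
    have hdisj : Disjoint Ppos L := by
      rw [Finset.disjoint_left]
      intro a ha hb
      simp only [hPposdef, hLdef, Finset.mem_filter] at ha hb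
      rw [ha.2.1] at hb; omega
    have horthb' : ∀ i j : Fin n, i ≠ j → (-γ) (b i) (b j) = 0 := by
      intro i j h; simp [horthb i j h]
    have := negdef_card_le (-γ) b horthb' (Ppos ∪ L) v
      (fun i hi => by simp only [LinearMap.neg_apply, Pi.neg_apply]; rw [hvposdiag i hi]; norm_num)
      (fun i hi j hj hij => by simp only [LinearMap.neg_apply, Pi.neg_apply]; rw [hsepP i hi j hj hij]; norm_num)
    rw [Finset.card_union_of_disjoint hdisj, hLm, hbposcard] at this
    exact this
  have hkn : k ≤ n := by
    rw [← hk]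
    calc (Finset.univ.filter fun i : Fin n => γ (b i) (b i) < 0).card
        ≤ (Finset.univ : Finset (Fin n)).card := Finset.card_filter_le _ _
      _ = n := by simp
  have hkeq : k = Pneg.card + m := by omega
  have hnkeq : n - k = Ppos.card + m := by omega
  -- ===================== numerics =====================
  have hnat : m * m + 3 * m < 2 * max k (n - k) := by
    have hM0 : (0:ℝ) ≤ 9/4 + 2 * ((max k (n - k) : ℕ) : ℝ) := by positivity
    have hs2 := Real.sq_sqrt hM0
    have hsnn := Real.sqrt_nonneg (9/4 + 2 * ((max k (n - k) : ℕ) : ℝ))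
    have hm0 : (0:ℝ) ≤ (m:ℝ) := Nat.cast_nonneg m
    have hr : (m:ℝ) * m + 3 * m < 2 * ((max k (n - k) : ℕ) : ℝ) := by nlinarith
    exact_mod_cast hr
  obtain ⟨ε, hεval, P, hPsub, hPbig⟩ :
      ∃ ε : ℝ, (ε = 1 ∨ ε = -1) ∧ ∃ P : Finset (Fin n),
        (∀ i ∈ P, σ i = i ∧ γ (e i) (e i) = ε) ∧ m * m + m < 2 * P.card := by
    rcases le_total Ppos.card Pneg.card with hc | hc
    · have hmx : max k (n - k) = k := max_eq_left (by omega)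
      rw [hmx] at hnat
      refine ⟨-1, Or.inr rfl, Pneg, ?_, by omega⟩
      intro i hi; simp only [hPnegdef, Finset.mem_filter] at hi; exact hi.2
    · have hmx : max k (n - k) = n - k := max_eq_right (by omega)
      rw [hmx] at hnat
      refine ⟨1, Or.inl rfl, Ppos, ?_, by omega⟩
      intro i hi; simp only [hPposdef, Finset.mem_filter] at hi; exact hi.2
  -- ===================== the small index set E =====================
  set E : Finset (Fin n × Fin n) := (L ×ˢ L).filter (fun q => (q.1 : ℕ) ≤ (q.2 : ℕ)) with hEdef
  have hEcard : 2 * E.card = m * m + m := by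
    set Egt : Finset (Fin n × Fin n) := (L ×ˢ L).filter (fun q => (q.2 : ℕ) < (q.1 : ℕ)) with hEgtdef
    set Elt : Finset (Fin n × Fin n) := (L ×ˢ L).filter (fun q => (q.1 : ℕ) < (q.2 : ℕ)) with hEltdef
    set Eeq : Finset (Fin n × Fin n) := (L ×ˢ L).filter (fun q => q.1 = q.2) with hEeqdef
    have hprod : (L ×ˢ L).card = m * m := by rw [Finset.card_product, hLm]
    have h1 : E.card + Egt.card = m * m := by
      have := Finset.card_filter_add_card_filter_not (s := L ×ˢ L)
        (p := fun q : Fin n × Fin n => (q.1 : ℕ) ≤ (q.2 : ℕ))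
      rw [hprod] at this
      have heq : (L ×ˢ L).filter (fun q : Fin n × Fin n => ¬ ((q.1 : ℕ) ≤ (q.2 : ℕ))) = Egt := by
        apply Finset.filter_congr
        intro q _
        omega
      rw [heq] at this
      exact this
    have h2 : Elt.card + Eeq.card = E.card := by
      have := Finset.card_filter_add_card_filter_not (s := E)
        (p := fun q : Fin n × Fin n => (q.1 : ℕ) < (q.2 : ℕ))
      have heq1 : E.filter (fun q : Fin n × Fin n => (q.1 : ℕ) < (q.2 : ℕ)) = Elt := by
        rw [hEdef, Finset.filter_filter]
        apply Finset.filter_congr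
        intro q _
        omega
      have heq2 : E.filter (fun q : Fin n × Fin n => ¬ ((q.1 : ℕ) < (q.2 : ℕ))) = Eeq := by
        rw [hEdef, Finset.filter_filter]
        apply Finset.filter_congr
        intro q _
        constructor
        · intro hq; exact Fin.ext (by omega)
        · intro hq; rw [hq]; omega
      rw [heq1, heq2] at this
      exact this
    have h3 : Elt.card = Egt.card := by
      apply Finset.card_bij (fun q _ => (q.2, q.1))
      · intro q hq
        simp only [hEltdef, Finset.mem_filter, Finset.mem_product] at hq
        simp only [hEgtdef, Finset.mem_filter, Finset.mem_product]
        exact ⟨⟨hq.1.2, hq.1.1⟩, hq.2⟩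
      · intro q _ q' _ h
        have ha := congrArg Prod.fst h
        have hb := congrArg Prod.snd h
        simp only at ha hb
        exact Prod.ext hb ha
      · intro q hq
        refine ⟨(q.2, q.1), ?_, rfl⟩
        simp only [hEltdef, Finset.mem_filter, Finset.mem_product] at hq ⊢
        simp only [hEgtdef, Finset.mem_filter, Finset.mem_product] at hq
        exact ⟨⟨hq.1.2, hq.1.1⟩, hq.2⟩
    have h4 : Eeq.card = m := by
      rw [← hLm]
      apply Finset.card_bij (fun q _ => q.1)
      · intro q hq
        simp only [hEeqdef, Finset.mem_filter, Finset.mem_product] at hq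
        exact hq.1.1
      · intro q hq q' hq' h
        simp only [hEeqdef, Finset.mem_filter, Finset.mem_product] at hq hq'
        exact Prod.ext h (by rw [← hq.2, ← hq'.2]; exact h)
      · intro j hj
        refine ⟨(j, j), ?_, rfl⟩
        simp only [hEeqdef, Finset.mem_filter, Finset.mem_product]
        exact ⟨⟨hj, hj⟩, trivial⟩
    omega
  have hEP : E.card < P.card := by omega
  -- ===================== flag structure =====================
  have hflag' : ∀ (r : Fin n) (u : J),
      mul (e r) u ∈ Submodule.span ℝ (⇑e '' {j : Fin n | (j : ℕ) < (r : ℕ)}) := by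
    intro r u
    have h1 : e r ∈ Submodule.span ℝ (⇑e '' {j : Fin n | (j : ℕ) < (r : ℕ) + 1}) :=
      Submodule.subset_span ⟨r, by simp, rfl⟩
    have := hflag ((r : ℕ) + 1) (by omega) (by have := r.isLt; omega) (e r) h1 u
    simpa using this
  have hker : ∀ (i : Fin n), σ i = i →
      ∀ z ∈ Submodule.span ℝ (⇑e '' {j : Fin n | (j : ℕ) < (i : ℕ)}), γ (e i) z = 0 := by
    intro i hi z hz
    have hle : Submodule.span ℝ (⇑e '' {j : Fin n | (j : ℕ) < (i : ℕ)}) ≤ LinearMap.ker (γ (e i)) := by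
      rw [Submodule.span_le]
      rintro _ ⟨j, hj, rfl⟩
      simp only [Set.mem_setOf_eq] at hj
      simp only [SetLike.mem_coe, LinearMap.mem_ker]
      have hjne : j ≠ i := by intro h; rw [h] at hj; omega
      exact hoff i j hjne (by rw [hi]; exact hjne)
    exact hle hz
  have horthflag : ∀ (i : Fin n), σ i = i → ∀ (u : J) (r : Fin n), (r : ℕ) ≤ (i : ℕ) →
      γ (mul (e i) u) (e r) = 0 := by
    intro i hi u r hr
    rw [htrace]
    have h2 : mul u (e r) ∈ Submodule.span ℝ (⇑e '' {j : Fin n | (j : ℕ) < (r : ℕ)}) := by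
      rw [hcomm]; exact hflag' r u
    refine hker i hi _ (Submodule.span_mono (Set.image_mono ?_) h2)
    intro j hj
    simp only [Set.mem_setOf_eq] at hj ⊢
    omega
  -- support of mul (e i) u in the flag
  have hsup : ∀ (i : Fin n) (u : J) (j : Fin n), ¬ ((j : ℕ) < (i : ℕ)) →
      e.repr (mul (e i) u) j = 0 := by
    intro i u j hj
    have hmem := (Basis.mem_span_image e).mp (hflag' i u)
    by_contra h0
    exact hj (hmem (Finsupp.mem_support_iff.mpr h0))
  have hreprz : ∀ (i : Fin n), σ i = i → ∀ (u : J) (j₀ : Fin n),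
      ¬ ((j₀ : ℕ) < (i : ℕ) ∧ (i : ℕ) < (σ j₀ : ℕ)) → e.repr (mul (e i) u) j₀ = 0 := by
    intro i hi u j₀ hj₀
    by_cases hlt : (j₀ : ℕ) < (i : ℕ)
    swap
    · exact hsup i u j₀ hlt
    have hle : (σ j₀ : ℕ) ≤ (i : ℕ) := by omega
    set w := mul (e i) u with hwdef
    have h0 : γ w (e (σ j₀)) = 0 := horthflag i hi u (σ j₀) hle
    have hexp : γ w (e (σ j₀)) = ∑ j : Fin n, e.repr w j * γ (e j) (e (σ j₀)) := by
      conv_lhs => rw [← Basis.sum_repr e w]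
      rw [map_sum, LinearMap.sum_apply]
      exact Finset.sum_congr rfl fun j _ => by rw [map_smul]; simp [smul_eq_mul]
    have hsum : ∑ j : Fin n, e.repr w j * γ (e j) (e (σ j₀)) = e.repr w j₀ * γ (e j₀) (e (σ j₀)) := by
      apply Finset.sum_eq_single j₀
      · intro j _ hjne
        by_cases hcase : j = σ j₀
        · subst hcase
          have hσj₀ : σ j₀ ≠ j₀ := fun hh => hjne hh
          have : σ (σ j₀) ≠ σ j₀ := by rw [hσ]; exact fun hh => hσj₀ hh.symm
          rw [(hpair (σ j₀) this).1, mul_zero]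
        · rw [hoff j (σ j₀) (fun hh => hcase hh.symm) (fun hh => hjne (hσinj hh).symm)]
          ring
      · intro h; exact absurd (Finset.mem_univ j₀) h
    have hval : γ (e j₀) (e (σ j₀)) ≠ 0 := by
      by_cases hs : σ j₀ = j₀
      · rw [hs]
        rcases hsingle j₀ hs with h | h <;> rw [h] <;> norm_num
      · rw [(hpair j₀ hs).2]; norm_num
    have := hexp.symm.trans h0
    rw [hsum] at this
    rcases mul_eq_zero.mp this with h | h
    · exact h
    · exact absurd h hval
  -- ===================== the representation over St i =====================
  set St : Fin n → Finset (Fin n) :=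
    fun i => Finset.univ.filter (fun j => (j : ℕ) < (i : ℕ) ∧ (i : ℕ) < (σ j : ℕ)) with hStdef
  have hStL : ∀ i : Fin n, St i ⊆ L := by
    intro i j hj
    simp only [hStdef, Finset.mem_filter] at hj
    simp only [hLdef, Finset.mem_filter, Finset.mem_univ, true_and]
    omega
  have hrep : ∀ (i : Fin n), σ i = i → ∀ (u : J),
      mul (e i) u = ∑ j ∈ St i, γ (mul (e i) u) (e (σ j)) • e j := by
    intro i hi u
    set w := mul (e i) u with hwdef
    have h1 : w = ∑ j ∈ St i, e.repr w j • e j := by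
      conv_lhs => rw [← Basis.sum_repr e w]
      symm
      apply Finset.sum_subset (Finset.subset_univ _)
      intro j _ hj
      simp only [hStdef, Finset.mem_filter, Finset.mem_univ, true_and] at hj
      rw [hreprz i hi u j (by tauto), zero_smul]
    have hcoef : ∀ j ∈ St i, γ w (e (σ j)) = e.repr w j := by
      intro j hj
      simp only [hStdef, Finset.mem_filter, Finset.mem_univ, true_and] at hj
      have hexp : γ w (e (σ j)) = ∑ j' ∈ St i, e.repr w j' * γ (e j') (e (σ j)) := by
        conv_lhs => rw [h1]
        rw [map_sum, LinearMap.sum_apply]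
        exact Finset.sum_congr rfl fun j' _ => by rw [map_smul]; simp [smul_eq_mul]
      rw [hexp]
      rw [Finset.sum_eq_single_of_mem j (by simp only [hStdef, Finset.mem_filter, Finset.mem_univ, true_and]; exact hj)]
      · have hjne : σ j ≠ j := by intro hh; rw [hh] at hj; omega
        rw [(hpair j hjne).2, mul_one]
      · intro j' hj' hne
        simp only [hStdef, Finset.mem_filter, Finset.mem_univ, true_and] at hj'
        have hns : σ j ≠ j' := by intro hh; rw [← hh] at hj'; omega
        have hnss : σ j ≠ σ j' := fun hh => hne ((hσinj hh).symm)
        rw [hoff j' (σ j) hns hnss, mul_zero]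
    conv_lhs => rw [h1]
    exact Finset.sum_congr rfl fun j hj => by rw [hcoef j hj]
  set Cf : Fin n → Fin n → Fin n → ℝ :=
    fun i j j' => γ (mul (e i) (e (σ j))) (e (σ j')) with hCfdef
  have hCfsymm : ∀ i j j', Cf i j j' = Cf i j' j := by
    intro i j j'
    rw [hCfdef]
    dsimp only
    rw [htrace, hcomm (e (σ j)) (e (σ j')), ← htrace]
  have hCf0r : ∀ (i : Fin n), σ i = i → ∀ (j j' : Fin n), j' ∈ L → j' ∉ St i → Cf i j j' = 0 := by
    intro i hi j j' hjL hjSt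
    simp only [hLdef, Finset.mem_filter, Finset.mem_univ, true_and] at hjL
    rw [hCfdef]
    dsimp only
    rw [hrep i hi (e (σ j)), map_sum, LinearMap.sum_apply]
    apply Finset.sum_eq_zero
    intro t ht
    simp only [hStdef, Finset.mem_filter, Finset.mem_univ, true_and] at ht
    have h1 : σ j' ≠ t := by
      intro hh
      have : σ t = j' := by rw [← hh, hσ]
      omega
    have h2 : σ j' ≠ σ t := by
      intro hh
      have := hσinj hh
      rw [this] at hjSt
      exact hjSt (by simp only [hStdef, Finset.mem_filter, Finset.mem_univ, true_and]; exact ht)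
    rw [map_smul]
    simp only [LinearMap.smul_apply, smul_eq_mul]
    rw [hoff t (σ j') h1 h2, mul_zero]
  have hCf0 : ∀ (i : Fin n), σ i = i → ∀ (j j' : Fin n), j ∈ L → j' ∈ L →
      ¬ (j ∈ St i ∧ j' ∈ St i) → Cf i j j' = 0 := by
    intro i hi j j' hjL hjL' hn
    by_cases h : j' ∈ St i
    · have hj : j ∉ St i := fun hh => hn ⟨hh, h⟩
      rw [hCfsymm]
      exact hCf0r i hi j' j hjL hj
    · exact hCf0r i hi j j' hjL' h
  -- ===================== the key expansion =====================
  have hstar : ∀ (i : Fin n), σ i = i → ∀ (u w : J),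
      γ (mul (e i) u) w = ∑ q ∈ L ×ˢ L, Cf i q.1 q.2 * γ (e q.2) u * γ (e q.1) w := by
    intro i hi u w
    have h1 : γ (mul (e i) u) w = ∑ j ∈ St i, γ (mul (e i) u) (e (σ j)) * γ (e j) w := by
      conv_lhs => rw [hrep i hi u]
      rw [map_sum, LinearMap.sum_apply]
      exact Finset.sum_congr rfl fun j _ => by rw [map_smul]; simp [smul_eq_mul]
    have h2 : ∀ j : Fin n, γ (mul (e i) u) (e (σ j)) = ∑ j' ∈ St i, Cf i j j' * γ (e j') u := by
      intro j
      have hh : γ (mul (e i) u) (e (σ j)) = γ (mul (e i) (e (σ j))) u := by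
        rw [htrace, hcomm u (e (σ j)), ← htrace]
      rw [hh]
      conv_lhs => rw [hrep i hi (e (σ j))]
      rw [map_sum, LinearMap.sum_apply]
      exact Finset.sum_congr rfl fun j' _ => by
        rw [map_smul]; simp [smul_eq_mul, hCfdef]
    rw [h1]
    have h3 : ∀ j ∈ St i, γ (mul (e i) u) (e (σ j)) * γ (e j) w
        = ∑ j' ∈ St i, Cf i j j' * γ (e j') u * γ (e j) w := by
      intro j _
      rw [h2 j, Finset.sum_mul]
    rw [Finset.sum_congr rfl h3]
    rw [← Finset.sum_product']
    apply Finset.sum_subset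
    · exact Finset.product_subset_product (hStL i) (hStL i)
    · intro q hq hq'
      have hjL : q.1 ∈ L ∧ q.2 ∈ L := by simpa [Finset.mem_product] using hq
      have hnSt : ¬ (q.1 ∈ St i ∧ q.2 ∈ St i) := by simpa [Finset.mem_product] using hq'
      rw [hCf0 i hi q.1 q.2 hjL.1 hjL.2 hnSt]
      ring
  -- ===================== a nonzero kernel element =====================
  let Φ : (↥P → ℝ) →ₗ[ℝ] (↥E → ℝ) :=
    { toFun := fun c q => ∑ i : ↥P, c i * Cf ↑i (↑q : Fin n × Fin n).1 (↑q : Fin n × Fin n).2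
      map_add' := by intro c d; funext q; simp [add_mul, Finset.sum_add_distrib]
      map_smul' := by intro a c; funext q; simp [Finset.mul_sum, mul_assoc] }
  have hΦninj : ¬ Function.Injective Φ := by
    intro hinj
    have := LinearMap.finrank_le_finrank_of_injective hinj
    simp only [Module.finrank_fintype_fun_eq_card, Fintype.card_coe] at this
    omega
  rw [Function.not_injective_iff] at hΦninj
  obtain ⟨c₁, c₂, hcc, hccne⟩ := hΦninj
  set c : ↥P → ℝ := c₁ - c₂ with hcdef
  have hc0 : c ≠ 0 := sub_ne_zero.mpr hccne
  have hcker : ∀ q : ↥E,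
      ∑ i : ↥P, c i * Cf ↑i (↑q : Fin n × Fin n).1 (↑q : Fin n × Fin n).2 = 0 := by
    intro q
    have hz : Φ c = 0 := by rw [hcdef, map_sub, hcc, sub_self]
    have := congrFun hz q
    simpa [Φ] using this
  have hckerall : ∀ q ∈ L ×ˢ L, ∑ i : ↥P, c i * Cf ↑i q.1 q.2 = 0 := by
    intro q hq
    rcases le_or_gt (q.1 : ℕ) (q.2 : ℕ) with h | h
    · have hqE : q ∈ E := by
        simp only [hEdef, Finset.mem_filter]
        exact ⟨hq, h⟩
      have := hcker ⟨q, hqE⟩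
      simpa using this
    · have hqE : (q.2, q.1) ∈ E := by
        simp only [hEdef, Finset.mem_filter, Finset.mem_product] at hq ⊢
        exact ⟨⟨hq.2, hq.1⟩, by omega⟩
      have hz := hcker ⟨(q.2, q.1), hqE⟩
      simp only at hz
      calc ∑ i : ↥P, c i * Cf ↑i q.1 q.2 = ∑ i : ↥P, c i * Cf ↑i q.2 q.1 :=
            Finset.sum_congr rfl fun i _ => by rw [hCfsymm]
        _ = 0 := hz
  -- ===================== the annihilating vector =====================
  set x : J := ∑ i : ↥P, c i • e ↑i with hxdef
  have hxann : ∀ u, mul x u = 0 := by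
    intro u
    apply hnd
    intro w
    have hmulx : mul x u = ∑ i : ↥P, c i • mul (e ↑i) u := by
      rw [hxdef, map_sum, LinearMap.sum_apply]
      exact Finset.sum_congr rfl fun i _ => by rw [map_smul]; rfl
    rw [hmulx, map_sum, LinearMap.sum_apply]
    have hterm : ∀ i : ↥P, γ (c i • mul (e ↑i) u) w
        = ∑ q ∈ L ×ˢ L, c i * (Cf ↑i q.1 q.2 * γ (e q.2) u * γ (e q.1) w) := by
      intro i
      rw [map_smul]
      simp only [LinearMap.smul_apply, smul_eq_mul]
      rw [hstar ↑i (hPsub ↑i i.2).1 u w, Finset.mul_sum]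
    rw [Finset.sum_congr rfl (fun i _ => hterm i)]
    rw [Finset.sum_comm]
    apply Finset.sum_eq_zero
    intro q hq
    have hfac : ∑ i : ↥P, c i * (Cf ↑i q.1 q.2 * γ (e q.2) u * γ (e q.1) w)
        = (∑ i : ↥P, c i * Cf ↑i q.1 q.2) * (γ (e q.2) u * γ (e q.1) w) := by
      rw [Finset.sum_mul]
      exact Finset.sum_congr rfl fun i _ => by ring
    rw [hfac, hckerall q hq, zero_mul]
  have hxx : γ x x ≠ 0 := by
    have hexp : γ x x = ∑ i : ↥P, c i * c i * ε := by
      rw [hxdef, bilin_sum γ Finset.univ c c (fun i : ↥P => e ↑i) (fun i : ↥P => e ↑i)]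
      refine Finset.sum_congr rfl fun i _ => ?_
      rw [Finset.sum_eq_single i]
      · rw [(hPsub ↑i i.2).2]
      · intro j _ hj
        have h1 : (↑j : Fin n) ≠ ↑i := fun hh => hj (Subtype.ext hh)
        rw [hoff ↑i ↑j h1 (by rw [(hPsub ↑i i.2).1]; exact h1), mul_zero]
      · intro h; exact absurd (Finset.mem_univ i) h
    rw [hexp, ← Finset.sum_mul]
    have hpos : 0 < ∑ i : ↥P, c i * c i := by
      have hex : ∃ i : ↥P, c i ≠ 0 := by
        by_contra h
        push_neg at h
        exact hc0 (funext fun i => h i)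
      obtain ⟨i0, hi0⟩ := hex
      exact Finset.sum_pos' (fun i _ => mul_self_nonneg (c i))
        ⟨i0, Finset.mem_univ i0, mul_self_pos.mpr hi0⟩
    intro h
    rcases mul_eq_zero.mp h with h | h
    · exact hpos.ne' h
    · rcases hεval with he | he <;> rw [he] at h <;> norm_num at h
  exact reducible_of_ann (by rw [hdim]; exact hn) mul γ hcomm hsymm htrace x hxx hxann
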